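/- Let 1 < q < 2, p > 4, A > 0, B ≥ 0, D > 0, and define s(t) = A t^{2−q} + B t^{4−q} − D t^{p−q} for t > 0 and, for F ∈ ℝ, φ_F(t) = (A/2)t² + (B/4)t⁴ − (F/q)t^q − (D/p)t^p for t ≥ 0. Let t_max be the unique maximizer of s on (0,∞). If 0 < F < s(t_max), then the equation s(t) = F has exactly two solutions t⁺ and t⁻ in (0,∞), with 0 < t⁺ < t_max < t⁻; φ_F is strictly decreasing on (0, t⁺), strictly increasing on (t⁺, t⁻) and strictly decreasing on (t⁻, ∞); φ_F(t⁺) = inf_{0 ≤ t ≤ t_max} φ_F(t); and φ_F(t⁻) = sup_{t ≥ t⁺} φ_F(t). -/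

import Mathlib

open Set Filter Topology

/-- The fibering auxiliary function `s(t) = A t^{2-q} + B t^{4-q} - D t^{p-q}`. -/
noncomputable def sFib (q p A B D t : ℝ) : ℝ :=
  A * t ^ (2 - q) + B * t ^ (4 - q) - D * t ^ (p - q)

/-- The fibering map `φ_F(t) = (A/2)t² + (B/4)t⁴ - (F/q)t^q - (D/p)t^p`. -/
noncomputable def phiFib (q p A B D F t : ℝ) : ℝ :=
  A / 2 * t ^ (2 : ℝ) + B / 4 * t ^ (4 : ℝ) - F / q * t ^ q - D / p * t ^ p

/-- Auxiliary function `h(t) = (2-q)A t^{2-p} + (4-q)B t^{4-p} - (p-q)D`, a decreasing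
rescaling of `s'`. -/
noncomputable def hFib (q p A B D t : ℝ) : ℝ :=
  (2 - q) * A * t ^ (2 - p) + (4 - q) * B * t ^ (4 - p) - (p - q) * D

section aux

variable {q p A B D F t : ℝ}

lemma sFib_contAt (h2 : 0 ≤ 2 - q) (h4 : 0 ≤ 4 - q) (hpq : 0 ≤ p - q) (t : ℝ) :
    ContinuousAt (sFib q p A B D) t := by
  unfold sFib
  exact (((Real.continuousAt_rpow_const t _ (Or.inr h2)).const_mul A).add
    ((Real.continuousAt_rpow_const t _ (Or.inr h4)).const_mul B)).sub
    ((Real.continuousAt_rpow_const t _ (Or.inr hpq)).const_mul D)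

lemma phiFib_contAt (hq : 0 ≤ q) (hp : 0 ≤ p) (t : ℝ) :
    ContinuousAt (phiFib q p A B D F) t := by
  unfold phiFib
  exact ((((Real.continuousAt_rpow_const t _ (Or.inr (by norm_num))).const_mul (A/2)).add
    ((Real.continuousAt_rpow_const t _ (Or.inr (by norm_num))).const_mul (B/4))).sub
    ((Real.continuousAt_rpow_const t _ (Or.inr hq)).const_mul (F/q))).sub
    ((Real.continuousAt_rpow_const t _ (Or.inr hp)).const_mul (D/p))

lemma hFib_contAt (ht : t ≠ 0) : ContinuousAt (hFib q p A B D) t := by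
  unfold hFib
  exact ((((Real.continuousAt_rpow_const t _ (Or.inl ht)).const_mul _).add
    ((Real.continuousAt_rpow_const t _ (Or.inl ht)).const_mul _)).sub continuousAt_const)

lemma hFib_strictAnti (hq2 : q < 2) (hq4 : q < 4) (hp : 4 < p) (hA : 0 < A) (hB : 0 ≤ B) :
    StrictAntiOn (hFib q p A B D) (Ioi 0) := by
  intro x hx y _ hxy
  unfold hFib
  have h1 : y ^ (2 - p) < x ^ (2 - p) := Real.rpow_lt_rpow_of_neg hx hxy (by linarith)
  have h2 : y ^ (4 - p) ≤ x ^ (4 - p) := Real.rpow_le_rpow_of_nonpos hx hxy.le (by linarith)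
  have c1 : 0 < (2 - q) * A := mul_pos (by linarith) hA
  have c2 : 0 ≤ (4 - q) * B := mul_nonneg (by linarith) hB
  nlinarith [mul_lt_mul_of_pos_left h1 c1, mul_le_mul_of_nonneg_left h2 c2]

lemma sFib_hasDerivAt (ht : 0 < t) :
    HasDerivAt (sFib q p A B D)
      (t ^ (1 - q) * (t ^ (p - 2) * hFib q p A B D t)) t := by
  have H : HasDerivAt (sFib q p A B D)
      (A * ((2 - q) * t ^ (2 - q - 1)) + B * ((4 - q) * t ^ (4 - q - 1))
        - D * ((p - q) * t ^ (p - q - 1))) t := by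
    exact (((Real.hasDerivAt_rpow_const (Or.inl ht.ne')).const_mul A).add
      ((Real.hasDerivAt_rpow_const (Or.inl ht.ne')).const_mul B)).sub
      ((Real.hasDerivAt_rpow_const (Or.inl ht.ne')).const_mul D)
  convert H using 1
  unfold hFib
  have e0 : t ^ (1 - q) * (t ^ (p - 2) * t ^ (2 - p)) = t ^ (2 - q - 1) := by
    rw [← Real.rpow_add ht, ← Real.rpow_add ht,
      show p - 2 + (2 - p) = (0 : ℝ) by ring]
    norm_num
    rw [show (1 : ℝ) - q = 2 - q - 1 by ring]
  have e2 : t ^ (1 - q) * (t ^ (p - 2) * t ^ (4 - p)) = t ^ (4 - q - 1) := by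
    rw [← Real.rpow_add ht, ← Real.rpow_add ht,
      show 1 - q + (p - 2 + (4 - p)) = 4 - q - 1 by ring]
  have ep : t ^ (1 - q) * t ^ (p - 2) = t ^ (p - q - 1) := by
    rw [← Real.rpow_add ht, show 1 - q + (p - 2) = p - q - 1 by ring]
  calc t ^ (1 - q) * (t ^ (p - 2) *
        ((2 - q) * A * t ^ (2 - p) + (4 - q) * B * t ^ (4 - p) - (p - q) * D))
      = (2 - q) * A * (t ^ (1 - q) * (t ^ (p - 2) * t ^ (2 - p)))
        + (4 - q) * B * (t ^ (1 - q) * (t ^ (p - 2) * t ^ (4 - p)))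
        - (p - q) * D * (t ^ (1 - q) * t ^ (p - 2)) := by ring
    _ = _ := by rw [e0, e2, ep]; ring

lemma phiFib_hasDerivAt (hq0 : q ≠ 0) (hp0 : p ≠ 0) (ht : 0 < t) :
    HasDerivAt (phiFib q p A B D F) (t ^ (q - 1) * (sFib q p A B D t - F)) t := by
  have H : HasDerivAt (phiFib q p A B D F)
      (A / 2 * ((2 : ℝ) * t ^ ((2 : ℝ) - 1)) + B / 4 * ((4 : ℝ) * t ^ ((4 : ℝ) - 1))
        - F / q * (q * t ^ (q - 1)) - D / p * (p * t ^ (p - 1))) t := by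
    exact ((((Real.hasDerivAt_rpow_const (Or.inl ht.ne')).const_mul (A / 2)).add
      ((Real.hasDerivAt_rpow_const (Or.inl ht.ne')).const_mul (B / 4))).sub
      ((Real.hasDerivAt_rpow_const (Or.inl ht.ne')).const_mul (F / q))).sub
      ((Real.hasDerivAt_rpow_const (Or.inl ht.ne')).const_mul (D / p))
  convert H using 1
  unfold sFib
  have e1 : t ^ (q - 1) * t ^ (2 - q) = t ^ ((2 : ℝ) - 1) := by
    rw [← Real.rpow_add ht, show q - 1 + (2 - q) = (2 : ℝ) - 1 by ring]
  have e3 : t ^ (q - 1) * t ^ (4 - q) = t ^ ((4 : ℝ) - 1) := by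
    rw [← Real.rpow_add ht, show q - 1 + (4 - q) = (4 : ℝ) - 1 by ring]
  have ep : t ^ (q - 1) * t ^ (p - q) = t ^ (p - 1) := by
    rw [← Real.rpow_add ht, show q - 1 + (p - q) = p - 1 by ring]
  calc t ^ (q - 1) * (A * t ^ (2 - q) + B * t ^ (4 - q) - D * t ^ (p - q) - F)
      = A * (t ^ (q - 1) * t ^ (2 - q))
        + B * (t ^ (q - 1) * t ^ (4 - q))
        - D * (t ^ (q - 1) * t ^ (p - q))
        - F * t ^ (q - 1) := by ring
    _ = _ := by
      rw [e1, e3, ep, show F / q * (q * t ^ (q - 1)) = F * t ^ (q - 1) by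
        rw [div_mul_eq_mul_div, mul_left_comm, mul_div_cancel_left₀ _ hq0],
        show D / p * (p * t ^ (p - 1)) = D * t ^ (p - 1) by
        rw [div_mul_eq_mul_div, mul_left_comm, mul_div_cancel_left₀ _ hp0]]
      ring

end aux

/-- Lemma 2.9(ii) of the paper: for `0 < F < s(t_max)`, the equation `s(t) = F` has exactly
two solutions `0 < t⁺ < t_max < t⁻`; `φ_F` is strictly decreasing on `(0, t⁺)`, strictly
increasing on `(t⁺, t⁻)` and strictly decreasing on `(t⁻, ∞)`; `φ_F(t⁺)` is the infimum of
`φ_F` on `[0, t_max]` and `φ_F(t⁻)` is the supremum of `φ_F` on `[t⁺, ∞)`. -/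
theorem phiFib_shape_of_pos (q p A B D F : ℝ) (hq1 : 1 < q) (hq2 : q < 2) (hp : 4 < p)
    (hA : 0 < A) (hB : 0 ≤ B) (hD : 0 < D)
    (tmax : ℝ) (htmax : 0 < tmax)
    (hmax : ∀ t, 0 < t → t ≠ tmax → sFib q p A B D t < sFib q p A B D tmax)
    (hF0 : 0 < F) (hFs : F < sFib q p A B D tmax) :
    ∃ tp tm : ℝ, 0 < tp ∧ tp < tmax ∧ tmax < tm ∧
      sFib q p A B D tp = F ∧ sFib q p A B D tm = F ∧
      (∀ t, 0 < t → sFib q p A B D t = F → t = tp ∨ t = tm) ∧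
      StrictAntiOn (phiFib q p A B D F) (Ioo 0 tp) ∧
      StrictMonoOn (phiFib q p A B D F) (Ioo tp tm) ∧
      StrictAntiOn (phiFib q p A B D F) (Ioi tm) ∧
      (∀ t, 0 ≤ t → t ≤ tmax → phiFib q p A B D F tp ≤ phiFib q p A B D F t) ∧
      (∀ t, tp ≤ t → phiFib q p A B D F t ≤ phiFib q p A B D F tm) := by
  have hq0 : (0 : ℝ) < q := by linarith
  have hscont : ∀ u : ℝ, ContinuousAt (sFib q p A B D) u :=
    sFib_contAt (by linarith) (by linarith) (by linarith)
  have hsContOn : ∀ s : Set ℝ, ContinuousOn (sFib q p A B D) s :=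
    fun s x _ => (hscont x).continuousWithinAt
  have hhanti : StrictAntiOn (hFib q p A B D) (Ioi 0) :=
    hFib_strictAnti hq2 (by linarith) hp hA hB
  -- two tendsto facts about negative-exponent powers at infinity
  have tt2 : Tendsto (fun u : ℝ => u ^ (2 - p)) atTop (𝓝 0) := by
    have := tendsto_rpow_neg_atTop (y := p - 2) (by linarith)
    simpa [neg_sub] using this
  have tt4 : Tendsto (fun u : ℝ => u ^ (4 - p)) atTop (𝓝 0) := by
    have := tendsto_rpow_neg_atTop (y := p - 4) (by linarith)
    simpa [neg_sub] using this
  -- h is eventually positive near 0⁺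
  have hsmall : ∃ a : ℝ, 0 < a ∧ 0 < hFib q p A B D a := by
    have t1 : Tendsto (fun u : ℝ => u ^ (p - 2)) (𝓝[>] (0:ℝ)) (𝓝[>] 0) := by
      rw [tendsto_nhdsWithin_iff]
      constructor
      · have hc : ContinuousAt (fun u : ℝ => u ^ (p - 2)) 0 :=
          Real.continuousAt_rpow_const 0 _ (Or.inr (by linarith))
        have := hc.tendsto.mono_left (nhdsWithin_le_nhds (s := Ioi (0:ℝ)))
        simpa [Real.zero_rpow (show p - 2 ≠ 0 by intro h; nlinarith)] using this
      · filter_upwards [self_mem_nhdsWithin] with u (hu : 0 < u)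
        exact Real.rpow_pos_of_pos hu _
    have t2 : Tendsto (fun u : ℝ => u ^ (2 - p)) (𝓝[>] (0:ℝ)) atTop := by
      have := t1.inv_tendsto_nhdsGT_zero
      apply this.congr'
      filter_upwards [self_mem_nhdsWithin] with u (hu : 0 < u)
      simp only [Pi.inv_apply]
      rw [← Real.rpow_neg hu.le, neg_sub]
    have t3 : Tendsto (fun u : ℝ => (2 - q) * A * u ^ (2 - p) - (p - q) * D)
        (𝓝[>] (0:ℝ)) atTop :=
      tendsto_atTop_add_const_right _ _ (t2.const_mul_atTop (mul_pos (by linarith) hA))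
    have t4 : Tendsto (hFib q p A B D) (𝓝[>] (0:ℝ)) atTop := by
      apply tendsto_atTop_mono' _ _ t3
      filter_upwards [self_mem_nhdsWithin] with u (hu : 0 < u)
      have : 0 ≤ (4 - q) * B * u ^ (4 - p) :=
        mul_nonneg (mul_nonneg (by linarith) hB) (Real.rpow_pos_of_pos hu _).le
      unfold hFib; linarith
    have := (t4.eventually (eventually_gt_atTop 0)).and self_mem_nhdsWithin
    obtain ⟨a, ha1, (ha2 : 0 < a)⟩ := this.exists
    exact ⟨a, ha2, ha1⟩
  obtain ⟨a, ha0, hha⟩ := hsmall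
  -- h is eventually negative at +∞
  have hbig : ∃ b : ℝ, a < b ∧ hFib q p A B D b < 0 := by
    have t5 : Tendsto (hFib q p A B D) atTop (𝓝 ((2-q)*A*0 + (4-q)*B*0 - (p-q)*D)) := by
      unfold hFib
      exact ((tt2.const_mul _).add (tt4.const_mul _)).sub_const _
    have hneg : (2-q)*A*0 + (4-q)*B*0 - (p-q)*D < 0 := by
      have : 0 < (p - q) * D := mul_pos (by linarith) hD
      linarith
    have := (t5.eventually (gt_mem_nhds hneg)).and (eventually_gt_atTop a)
    obtain ⟨b, hb1, hb2⟩ := this.exists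
    exact ⟨b, hb2, hb1⟩
  obtain ⟨b, hab, hhb⟩ := hbig
  -- the unique critical point t₀ of s
  have hcont_h : ContinuousOn (hFib q p A B D) (Icc a b) := fun x hx =>
    (hFib_contAt (by linarith [hx.1] : x ≠ 0)).continuousWithinAt
  obtain ⟨t0, ht0mem, ht0⟩ :=
    intermediate_value_Icc' hab.le hcont_h ⟨hhb.le, hha.le⟩
  have ht0pos : 0 < t0 := lt_of_lt_of_le ha0 ht0mem.1
  -- sign of h on both sides of t₀
  have hpos : ∀ x, 0 < x → x < t0 → 0 < hFib q p A B D x := fun x hx hxt0 => by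
    have := hhanti hx ht0pos hxt0; rw [ht0] at this; exact this
  have hneg : ∀ x, t0 < x → hFib q p A B D x < 0 := fun x hx => by
    have := hhanti ht0pos (ht0pos.trans hx) hx; rw [ht0] at this; exact this
  -- monotonicity of s
  have smono0 : StrictMonoOn (sFib q p A B D) (Ioc 0 t0) := by
    apply strictMonoOn_of_deriv_pos (convex_Ioc 0 t0) (hsContOn _)
    intro x hx
    rw [interior_Ioc] at hx
    rw [(sFib_hasDerivAt hx.1).deriv]
    exact mul_pos (Real.rpow_pos_of_pos hx.1 _)
      (mul_pos (Real.rpow_pos_of_pos hx.1 _) (hpos x hx.1 hx.2))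
  have santi0 : StrictAntiOn (sFib q p A B D) (Ici t0) := by
    apply strictAntiOn_of_deriv_neg (convex_Ici t0) (hsContOn _)
    intro x hx
    rw [interior_Ici] at hx
    have hx0 : 0 < x := ht0pos.trans hx
    rw [(sFib_hasDerivAt hx0).deriv]
    exact mul_neg_of_pos_of_neg (Real.rpow_pos_of_pos hx0 _)
      (mul_neg_of_pos_of_neg (Real.rpow_pos_of_pos hx0 _) (hneg x hx))
  -- t₀ = tmax
  have ht0max : tmax = t0 := by
    by_contra hne
    have hlt := hmax t0 ht0pos (fun h => hne (h ▸ rfl))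
    rcases lt_or_gt_of_ne hne with h | h
    · have := smono0 (⟨htmax, h.le⟩ : tmax ∈ Ioc 0 t0) ⟨ht0pos, le_refl t0⟩ h
      linarith
    · have := santi0 (le_refl t0 : t0 ∈ Ici t0) (h.le : tmax ∈ Ici t0) h
      linarith
  subst ht0max
  -- existence of tp
  have hs0 : Tendsto (sFib q p A B D) (𝓝[>] (0:ℝ)) (𝓝 0) := by
    have hc := (hscont 0).tendsto.mono_left (nhdsWithin_le_nhds (s := Ioi (0:ℝ)))
    have : sFib q p A B D 0 = 0 := by
      unfold sFib
      rw [Real.zero_rpow (by intro h; nlinarith : (2:ℝ) - q ≠ 0),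
        Real.zero_rpow (by intro h; nlinarith : (4:ℝ) - q ≠ 0),
        Real.zero_rpow (by intro h; nlinarith : p - q ≠ 0)]
      ring
    rwa [this] at hc
  obtain ⟨c, hc1, hc2⟩ := ((hs0.eventually (gt_mem_nhds hF0)).and
    (eventually_mem_set.2 (Ioo_mem_nhdsGT_of_mem ⟨le_refl 0, htmax⟩))).exists
  obtain ⟨tp, htpmem, hstp⟩ := intermediate_value_Icc hc2.2.le (hsContOn _)
    ⟨hc1.le, hFs.le⟩
  have htppos : 0 < tp := lt_of_lt_of_le hc2.1 htpmem.1
  have htplt : tp < tmax := lt_of_le_of_ne htpmem.2 (fun h => by rw [h] at hstp; linarith)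
  -- existence of tm
  have hsbot : Tendsto (sFib q p A B D) atTop atBot := by
    have tb : Tendsto (fun u : ℝ => A * u ^ (2 - p) + B * u ^ (4 - p) - D)
        atTop (𝓝 (A * 0 + B * 0 - D)) :=
      ((tt2.const_mul _).add (tt4.const_mul _)).sub_const _
    have hDneg : A * 0 + B * 0 - D < 0 := by linarith
    have := (tendsto_rpow_atTop (show (0:ℝ) < p - q by linarith)).atTop_mul_neg hDneg tb
    apply this.congr'
    filter_upwards [eventually_gt_atTop (0:ℝ)] with u hu
    unfold sFib
    have e1 : u ^ (p - q) * u ^ (2 - p) = u ^ (2 - q) := by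
      rw [← Real.rpow_add hu, show p - q + (2 - p) = 2 - q by ring]
    have e2 : u ^ (p - q) * u ^ (4 - p) = u ^ (4 - q) := by
      rw [← Real.rpow_add hu, show p - q + (4 - p) = 4 - q by ring]
    calc u ^ (p - q) * (A * u ^ (2 - p) + B * u ^ (4 - p) - D)
        = A * (u ^ (p - q) * u ^ (2 - p)) + B * (u ^ (p - q) * u ^ (4 - p))
          - D * u ^ (p - q) := by ring
      _ = _ := by rw [e1, e2]
  obtain ⟨d, hd1, hd2⟩ := ((hsbot.eventually (eventually_lt_atBot F)).and
    (eventually_gt_atTop tmax)).exists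
  obtain ⟨tm, htmmem, hstm⟩ := intermediate_value_Icc' hd2.le (hsContOn _)
    ⟨hd1.le, hFs.le⟩
  have htmgt : tmax < tm := lt_of_le_of_ne htmmem.1 (fun h => by rw [← h] at hstm; linarith)
  have htmpos : 0 < tm := htmax.trans htmgt
  have htptm : tp < tm := htplt.trans htmgt
  -- uniqueness
  have huniq : ∀ t, 0 < t → sFib q p A B D t = F → t = tp ∨ t = tm := by
    intro t ht hst
    rcases le_or_gt t tmax with h | h
    · left
      exact smono0.injOn ⟨ht, h⟩ ⟨htppos, htplt.le⟩ (hst.trans hstp.symm)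
    · right
      exact santi0.injOn (le_of_lt h : t ∈ Ici tmax) (htmgt.le : tm ∈ Ici tmax)
        (hst.trans hstm.symm)
  -- monotonicity of φ
  have hq0' : q ≠ 0 := ne_of_gt hq0
  have hp0' : p ≠ 0 := by positivity
  have hφcontOn : ∀ s : Set ℝ, ContinuousOn (phiFib q p A B D F) s :=
    fun s x _ => (phiFib_contAt hq0.le (by linarith) x).continuousWithinAt
  have hderiv : ∀ x : ℝ, 0 < x →
      deriv (phiFib q p A B D F) x = x ^ (q - 1) * (sFib q p A B D x - F) :=
    fun x hx => (phiFib_hasDerivAt hq0' hp0' hx).deriv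
  have pA1 : StrictAntiOn (phiFib q p A B D F) (Icc 0 tp) := by
    apply strictAntiOn_of_deriv_neg (convex_Icc 0 tp) (hφcontOn _)
    intro x hx
    rw [interior_Icc] at hx
    rw [hderiv x hx.1]
    have hsx : sFib q p A B D x < F := by
      have := smono0 ⟨hx.1, (hx.2.trans htplt).le⟩ ⟨htppos, htplt.le⟩ hx.2
      linarith [hstp ▸ this]
    exact mul_neg_of_pos_of_neg (Real.rpow_pos_of_pos hx.1 _) (by linarith)
  have pM : StrictMonoOn (phiFib q p A B D F) (Icc tp tm) := by
    apply strictMonoOn_of_deriv_pos (convex_Icc tp tm) (hφcontOn _)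
    intro x hx
    rw [interior_Icc] at hx
    have hx0 : 0 < x := htppos.trans hx.1
    rw [hderiv x hx0]
    have hsx : F < sFib q p A B D x := by
      rcases le_or_gt x tmax with h | h
      · have := smono0 ⟨htppos, htplt.le⟩ ⟨hx0, h⟩ hx.1
        linarith [hstp ▸ this]
      · have := santi0 (h.le : x ∈ Ici tmax) (htmgt.le : tm ∈ Ici tmax) hx.2
        linarith [hstm ▸ this]
    exact mul_pos (Real.rpow_pos_of_pos hx0 _) (by linarith)
  have pA2 : StrictAntiOn (phiFib q p A B D F) (Ici tm) := by
    apply strictAntiOn_of_deriv_neg (convex_Ici tm) (hφcontOn _)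
    intro x hx
    rw [interior_Ici] at hx
    have hx0 : 0 < x := htmpos.trans hx
    rw [hderiv x hx0]
    have hsx : sFib q p A B D x < F := by
      have := santi0 (htmgt.le : tm ∈ Ici tmax) ((htmgt.trans hx).le : x ∈ Ici tmax) hx
      linarith [hstm ▸ this]
    exact mul_neg_of_pos_of_neg (Real.rpow_pos_of_pos hx0 _) (by linarith)
  refine ⟨tp, tm, htppos, htplt, htmgt, hstp, hstm, huniq,
    pA1.mono Ioo_subset_Icc_self, pM.mono Ioo_subset_Icc_self,
    pA2.mono Ioi_subset_Ici_self, ?_, ?_⟩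
  · intro t ht0 httmax
    rcases lt_trichotomy t tp with h | h | h
    · exact (pA1 ⟨ht0, h.le⟩ ⟨htppos.le, le_refl tp⟩ h).le
    · subst h; exact le_refl _
    · exact (pM ⟨le_refl tp, htptm.le⟩ ⟨h.le, httmax.trans htmgt.le⟩ h).le
  · intro t htp
    rcases lt_trichotomy t tm with h2 | h2 | h2
    · exact (pM ⟨htp, h2.le⟩ ⟨htptm.le, le_refl tm⟩ h2).le
    · subst h2; exact le_refl _
    · exact (pA2 (le_refl tm : tm ∈ Ici tm) (h2.le : t ∈ Ici tm) h2).le
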